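/- arXiv:1809.03238 — 2 statements merged into one kernel-verified Lean document; each statement's English description precedes it below -/
import Mathlib

section
/- Let k be a field of characteristic not 2, and define e(l) ∈ GW(k) by e(l) = m·h for l = 2m and e(l) = m·h + ⟨1⟩ for l = 2m+1, with h = ⟨1⟩+⟨-1⟩. If l1, l2, n1, n2 are positive integers with l1·n1 - l2·n2 = 1, then e(l1)·e(n1) - e(l2)·e(n2) = ⟨(-1)^{l2·n2}⟩ in GW(k). -/
/-- The defining relations of the Grothendieck–Witt ring of a field `k`
(`char k ≠ 2`), presented on generators `⟨a⟩` for `a ∈ kˣ`: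
`⟨a⟩⟨b⟩ = ⟨ab⟩`, `⟨1⟩ = 1`, and
`⟨a⟩ + ⟨b⟩ = ⟨a + b⟩(1 + ⟨ab⟩)` whenever `a + b ≠ 0`. -/
def GWRel (k : Type) [Field k] : FreeCommRing kˣ → FreeCommRing kˣ → Prop :=
  fun x y =>
    (∃ a b : kˣ, x = FreeCommRing.of a * FreeCommRing.of b ∧ y = FreeCommRing.of (a * b)) ∨
    (x = FreeCommRing.of 1 ∧ y = 1) ∨
    (∃ a b c : kˣ, (a : k) + (b : k) = (c : k) ∧
      x = FreeCommRing.of a + FreeCommRing.of b ∧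
      y = FreeCommRing.of c * (1 + FreeCommRing.of (a * b)))

/-- The Grothendieck–Witt ring of the field `k` (for `char k ≠ 2`), as the
quotient of the free commutative ring on `kˣ` by the defining relations. -/
def GW (k : Type) [Field k] := RingQuot (GWRel k)

noncomputable instance (k : Type) [Field k] : CommRing (GW k) :=
  inferInstanceAs (CommRing (RingQuot (GWRel k)))

/-- `⟨a⟩ ∈ GW(k)`, the class of the rank-one form `x ↦ a·x²`. -/
noncomputable def GW.form {k : Type} [Field k] (a : kˣ) : GW k :=
  RingQuot.mkRingHom (GWRel k) (FreeCommRing.of a)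

/-- The hyperbolic class `h = ⟨1⟩ + ⟨-1⟩` in `GW(k)`. -/
noncomputable def GW.hyp (k : Type) [Field k] : GW k :=
  GW.form 1 + GW.form (-1)

/-- The element `e(l) ∈ GW(k)`: `e(2m) = m·h` and `e(2m+1) = m·h + ⟨1⟩`,
where `h = ⟨1⟩ + ⟨-1⟩`. -/
noncomputable def GW.e (k : Type) [Field k] (l : ℕ) : GW k :=
  (l / 2) • GW.hyp k + (if l % 2 = 1 then GW.form (1 : kˣ) else 0)

variable {k : Type} [Field k]

lemma GW.form_mul (a b : kˣ) : GW.form a * GW.form b = GW.form (a * b) := by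
  have := RingQuot.mkRingHom_rel (r := GWRel k)
    (Or.inl ⟨a, b, rfl, rfl⟩)
  rw [map_mul] at this; exact this

lemma GW.form_one : GW.form (1 : kˣ) = (1 : GW k) := by
  have := RingQuot.mkRingHom_rel (r := GWRel k)
    (Or.inr (Or.inl ⟨rfl, rfl⟩))
  rw [map_one] at this; exact this

lemma GW.neg_sq : GW.form (-1 : kˣ) * GW.form (-1 : kˣ) = (1 : GW k) := by
  rw [GW.form_mul]; simpa using GW.form_one (k := k)

lemma GW.hyp_eq : GW.hyp k = 1 + GW.form (-1 : kˣ) := by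
  rw [GW.hyp, GW.form_one]

lemma GW.hyp_sq : GW.hyp k * GW.hyp k = 2 * GW.hyp k := by
  rw [GW.hyp_eq]; ring_nf
  rw [show GW.form (-1:kˣ)^2 = GW.form (-1:kˣ) * GW.form (-1:kˣ) by ring, GW.neg_sq]; ring

lemma GW.e_two_mul (a : ℕ) : GW.e k (2 * a) = a • GW.hyp k := by
  simp [GW.e, Nat.mul_div_cancel_left, Nat.mul_mod_right]

lemma GW.e_two_mul_add_one (a : ℕ) : GW.e k (2 * a + 1) = a • GW.hyp k + 1 := by
  have h1 : (2 * a + 1) / 2 = a := by omega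
  have h2 : (2 * a + 1) % 2 = 1 := by omega
  simp [GW.e, h1, h2, GW.form_one]

lemma GW.e_mul (l n : ℕ) : GW.e k l * GW.e k n = GW.e k (l * n) := by
  rcases Nat.even_or_odd l with ⟨a, ha⟩ | ⟨a, ha⟩ <;>
    rcases Nat.even_or_odd n with ⟨b, hb⟩ | ⟨b, hb⟩ <;>
    subst ha hb
  · rw [show a + a = 2 * a by ring, show b + b = 2 * b by ring,
      show (2*a) * (2*b) = 2 * (2*(a*b)) by ring, GW.e_two_mul, GW.e_two_mul, GW.e_two_mul]
    simp only [nsmul_eq_mul, Nat.cast_mul]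
    rw [show (a:GW k) * GW.hyp k * ((b:GW k) * GW.hyp k)
        = (a:GW k)*(b:GW k)*(GW.hyp k * GW.hyp k) by ring, GW.hyp_sq]
    push_cast; ring
  · rw [show a + a = 2 * a by ring, show (2*a) * (2*b+1) = 2 * (2*a*b + a) by ring,
      GW.e_two_mul, GW.e_two_mul_add_one, GW.e_two_mul]
    simp only [nsmul_eq_mul]
    rw [show (a:GW k) * GW.hyp k * ((b:GW k) * GW.hyp k + 1)
        = (a:GW k)*(b:GW k)*(GW.hyp k * GW.hyp k) + (a:GW k) * GW.hyp k by ring, GW.hyp_sq]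
    push_cast; ring
  · rw [show b + b = 2 * b by ring, show (2*a+1) * (2*b) = 2 * (2*a*b + b) by ring,
      GW.e_two_mul_add_one, GW.e_two_mul, GW.e_two_mul]
    simp only [nsmul_eq_mul]
    rw [show ((a:GW k) * GW.hyp k + 1) * ((b:GW k) * GW.hyp k)
        = (a:GW k)*(b:GW k)*(GW.hyp k * GW.hyp k) + (b:GW k) * GW.hyp k by ring, GW.hyp_sq]
    push_cast; ring
  · rw [show (2*a+1) * (2*b+1) = 2 * (2*a*b + a + b) + 1 by ring,
      GW.e_two_mul_add_one, GW.e_two_mul_add_one, GW.e_two_mul_add_one]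
    simp only [nsmul_eq_mul]
    rw [show ((a:GW k) * GW.hyp k + 1) * ((b:GW k) * GW.hyp k + 1)
        = (a:GW k)*(b:GW k)*(GW.hyp k * GW.hyp k) + (a:GW k) * GW.hyp k
          + (b:GW k) * GW.hyp k + 1 by ring, GW.hyp_sq]
    push_cast; ring

/-- For `char k ≠ 2`: if `l1, l2, n1, n2` are positive integers with
`l1·n1 - l2·n2 = 1`, then `e(l1)·e(n1) - e(l2)·e(n2) = ⟨(-1)^{l2·n2}⟩` in `GW(k)`. -/
theorem stmt5 (k : Type) [Field k] (hchar : ringChar k ≠ 2)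
    (l1 l2 n1 n2 : ℕ) (hl1 : 0 < l1) (hl2 : 0 < l2) (hn1 : 0 < n1) (hn2 : 0 < n2)
    (h : (l1 * n1 : ℤ) - (l2 * n2 : ℤ) = 1) :
    GW.e k l1 * GW.e k n1 - GW.e k l2 * GW.e k n2 = GW.form ((-1 : kˣ) ^ (l2 * n2)) := by
  have hm : l1 * n1 = l2 * n2 + 1 := by
    have := h; push_cast at this; omega
  rw [GW.e_mul, GW.e_mul, hm]
  set m := l2 * n2 with hmdef
  rcases Nat.even_or_odd m with hme | hmo
  · obtain ⟨a, ha⟩ := hme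
    rw [show m + 1 = 2 * a + 1 by omega, show m = 2 * a by omega,
      GW.e_two_mul_add_one, GW.e_two_mul, (even_two_mul a).neg_one_pow, GW.form_one]
    ring
  · obtain ⟨a, ha⟩ := hmo
    rw [show m + 1 = 2 * (a + 1) by omega, show m = 2 * a + 1 by omega,
      GW.e_two_mul, GW.e_two_mul_add_one, (odd_two_mul_add_one a).neg_one_pow]
    rw [GW.hyp_eq]
    simp only [nsmul_eq_mul]
    push_cast; ring
end

section
/- Let k be a finite field and f a nonzero polynomial in k[x₁,…,xₙ]. Then there exists a natural number N such that for every finite field extension K/k with [K:k] ≥ N there is a point a ∈ Kⁿ with f(a) ≠ 0. -/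
/-- Let `k` be a finite field and `f` a nonzero polynomial in `n` variables over `k`.
Then there is `N` such that for every finite field extension `K/k` of degree at
least `N` there is a point `a ∈ Kⁿ` with `f(a) ≠ 0`. -/
theorem stmt7 (k : Type) [Field k] [Finite k] (n : ℕ)
    (f : MvPolynomial (Fin n) k) (hf : f ≠ 0) :
    ∃ N : ℕ, ∀ (K : Type) [Field K] [Algebra k K] [FiniteDimensional k K],
      N ≤ Module.finrank k K → ∃ a : Fin n → K, MvPolynomial.aeval a f ≠ 0 := by
  classical
  refine ⟨f.totalDegree + 1, fun K _ _ _ hK => ?_⟩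
  have : Finite K := Module.finite_of_finite k
  have : Fintype K := Fintype.ofFinite K
  have : Fintype k := Fintype.ofFinite k
  set g : MvPolynomial (Fin n) K := MvPolynomial.map (algebraMap k K) f with hg
  have hg0 : g ≠ 0 := by
    intro h
    exact hf (MvPolynomial.map_injective _ (algebraMap k K).injective (by simpa using h))
  -- cardinality bound : totalDegree f + 1 ≤ card K
  have hcard : f.totalDegree + 1 < Fintype.card K := by
    have h2 : (2 : ℕ) ^ Module.finrank k K ≤ Fintype.card K := by
      have := Module.card_eq_pow_finrank (K := k) (V := K)
      rw [this]
      exact Nat.pow_le_pow_left Fintype.one_lt_card _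
    calc f.totalDegree + 1 < 2 ^ (f.totalDegree + 1) := Nat.lt_two_pow_self
      _ ≤ 2 ^ Module.finrank k K := Nat.pow_le_pow_right (by norm_num) hK
      _ ≤ Fintype.card K := h2
  by_contra h
  push_neg at h
  have heval : ∀ v : Fin n → K, MvPolynomial.eval v g = 0 := by
    intro v
    have := h v
    rwa [MvPolynomial.aeval_def, MvPolynomial.eval₂_eq_eval_map] at this
  have hmem : g ∈ MvPolynomial.restrictDegree (Fin n) K (Fintype.card K - 1) := by
    rw [MvPolynomial.mem_restrictDegree_iff_sup]
    intro i
    calc g.degrees.count i = f.degrees.count i := by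
          rw [hg, MvPolynomial.degrees_map_of_injective f (algebraMap k K).injective]
      _ = MvPolynomial.degreeOf i f := (MvPolynomial.degreeOf_def i f).symm
      _ ≤ f.totalDegree := MvPolynomial.degreeOf_le_totalDegree f i
      _ ≤ Fintype.card K - 1 := by omega
  exact hg0 (MvPolynomial.eq_zero_of_eval_eq_zero (Fin n) K g heval hmem)
end
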